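/- arXiv:1812.04665 — 2 statements merged into one kernel-verified Lean document; each statement's English description precedes it below -/
import Mathlib

section
/- Let P_ε(z) = z(z^k + ε₁z + ε₀) with k ≥ 2, and let σ(z) = e^{((2m+1)/k)πi} · conj(z). If ε₁' = -e^{-((2m+1)/k)πi} · conj(ε₁) and ε₀' = -conj(ε₀), then for any real-time solution z(t) of dz/dt = P_ε(z), the curve Z(t) = σ(z(-t)) is a solution of dZ/dT = P_{ε'}(Z). -/
open Complex

theorem stmt1 (k : ℕ) (hk : 2 ≤ k) (m : ℤ) (ε₁ ε₀ ε₁' ε₀' : ℂ)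
    (hε₁ : ε₁' = -Complex.exp (-((2 * (m : ℂ) + 1) / k) * (Real.pi : ℂ) * Complex.I) * (starRingEnd ℂ) ε₁)
    (hε₀ : ε₀' = -(starRingEnd ℂ) ε₀)
    (z : ℝ → ℂ)
    (hz : ∀ t : ℝ, HasDerivAt z (z t * ((z t) ^ k + ε₁ * z t + ε₀)) t) :
    ∀ t : ℝ, HasDerivAt
      (fun s : ℝ => Complex.exp (((2 * (m : ℂ) + 1) / k) * (Real.pi : ℂ) * Complex.I) * (starRingEnd ℂ) (z (-s)))
      ((Complex.exp (((2 * (m : ℂ) + 1) / k) * (Real.pi : ℂ) * Complex.I) * (starRingEnd ℂ) (z (-t))) *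
        ((Complex.exp (((2 * (m : ℂ) + 1) / k) * (Real.pi : ℂ) * Complex.I) * (starRingEnd ℂ) (z (-t))) ^ k
          + ε₁' * (Complex.exp (((2 * (m : ℂ) + 1) / k) * (Real.pi : ℂ) * Complex.I) * (starRingEnd ℂ) (z (-t)))
          + ε₀')) t := by
  intro t
  set c := Complex.exp (((2 * (m : ℂ) + 1) / k) * (Real.pi : ℂ) * Complex.I) with hc_def
  have hk0 : (k : ℂ) ≠ 0 := Nat.cast_ne_zero.mpr (by omega)
  have hck : c ^ k = -1 := by
    rw [hc_def, ← Complex.exp_nat_mul]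
    have : (k : ℂ) * (((2 * (m : ℂ) + 1) / k) * (Real.pi : ℂ) * Complex.I)
        = (2 * (m : ℂ) + 1) * ((Real.pi : ℂ) * Complex.I) := by
      field_simp
    rw [this]
    have h1 : (2 * (m : ℂ) + 1) = ((2 * m + 1 : ℤ) : ℂ) := by push_cast; ring
    rw [h1, Complex.exp_int_mul, Complex.exp_pi_mul_I]
    exact Odd.neg_one_zpow ⟨m, by ring⟩
  have hinv : c * Complex.exp (-((2 * (m : ℂ) + 1) / k) * (Real.pi : ℂ) * Complex.I) = 1 := by
    rw [hc_def, ← Complex.exp_add]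
    ring_nf
    exact Complex.exp_zero
  -- derivative of s ↦ z (-s)
  have h1 : HasDerivAt (fun s : ℝ => z (-s))
      (-(z (-t) * ((z (-t)) ^ k + ε₁ * z (-t) + ε₀))) t := by
    have hneg : HasDerivAt (fun s : ℝ => -s) (-1 : ℝ) t := hasDerivAt_neg t
    have := HasDerivAt.scomp (g₁ := z) (h := fun s : ℝ => -s) (x := t) (hz (-t)) hneg
    simp at this; exact this
  have h2 : HasDerivAt (fun s : ℝ => (starRingEnd ℂ) (z (-s)))
      ((starRingEnd ℂ) (-(z (-t) * ((z (-t)) ^ k + ε₁ * z (-t) + ε₀)))) t := by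
    exact (Complex.conjCLE.hasFDerivAt.comp_hasDerivAt t h1)
  have h3 := h2.const_mul c
  convert h3 using 1
  · rfl
  set w := (starRingEnd ℂ) (z (-t)) with hw
  simp only [map_neg, map_mul, map_add, map_pow]
  rw [hε₁, hε₀, mul_pow, hck]
  linear_combination (-(c * w ^ 2 * (starRingEnd ℂ) ε₁)) * hinv
end

section
/- Let k ≥ 2, s ∈ (0,1), θ ∈ ℝ, and let z_j ≠ 0 satisfy z_j^k - k(1-s)^{k-1}z_j + (k-1)s^k e^{iθ} = 0. If the eigenvalue λ_j = k(k-1)((1-s)^{k-1}z_j - s^k e^{iθ}) is a real multiple of λ₀ = (k-1)s^k e^{iθ} (i.e. λ_j ∈ ℝ·e^{iθ}), then (k-1)θ ∈ πℤ. -/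
theorem stmt7 (k : ℕ) (hk : 2 ≤ k) (s θ : ℝ) (hs : 0 < s) (hs1 : s < 1)
    (zj : ℂ) (hzj : zj ≠ 0)
    (hroot : zj ^ k - (k : ℂ) * ((1 : ℂ) - s) ^ (k - 1) * zj
      + ((k : ℂ) - 1) * (s : ℂ) ^ k * Complex.exp (θ * Complex.I) = 0)
    (hcol : ∃ c : ℝ,
      (k : ℂ) * ((k : ℂ) - 1) *
          (((1 : ℂ) - s) ^ (k - 1) * zj - (s : ℂ) ^ k * Complex.exp (θ * Complex.I))
        = (c : ℂ) * (((k : ℂ) - 1) * (s : ℂ) ^ k * Complex.exp (θ * Complex.I))) :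
    ∃ n : ℤ, ((k : ℝ) - 1) * θ = n * Real.pi := by
  obtain ⟨c, hc⟩ := hcol
  have hkR : (2:ℝ) ≤ (k:ℝ) := by exact_mod_cast hk
  have hk0 : (k:ℂ) ≠ 0 := Nat.cast_ne_zero.mpr (by omega)
  have hk1 : (k:ℂ) - 1 ≠ 0 := by
    intro h
    have h1 : (k:ℂ) = 1 := by linear_combination h
    have : (k:ℝ) = 1 := by exact_mod_cast h1
    linarith
  have hA : ((1:ℂ) - s) ≠ 0 := by
    intro h
    have : ((1:ℝ) - s : ℝ) = 0 := by
      have := congrArg Complex.re h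
      simpa using this
    linarith
  have hAk : ((1:ℂ) - s) ^ (k-1) ≠ 0 := pow_ne_zero _ hA
  set e := Complex.exp (θ * Complex.I) with he
  have he0 : e ≠ 0 := Complex.exp_ne_zero _
  set r : ℝ := (c / k + 1) * s ^ k / (1 - s) ^ (k-1) with hr
  have hrc : ((r:ℝ):ℂ) = ((c:ℂ) / k + 1) * (s:ℂ) ^ k / ((1:ℂ) - s) ^ (k-1) := by
    rw [hr]; push_cast; ring
  have h2 : (k:ℂ) * (((1:ℂ)-s)^(k-1) * zj - (s:ℂ)^k * e) = (c:ℂ) * ((s:ℂ)^k * e) := by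
    apply mul_left_cancel₀ hk1
    linear_combination hc
  have hz : zj = (r:ℂ) * e := by
    rw [hrc]
    field_simp
    linear_combination h2
  have hrne : r ≠ 0 := by
    intro h
    apply hzj
    rw [hz, h]
    simp
  have heq : ((r ^ k : ℝ) : ℂ) * Complex.exp ((((k:ℝ)-1)*θ : ℝ) * Complex.I)
      = (((k:ℝ) * (1-s)^(k-1) * r - ((k:ℝ)-1) * s^k : ℝ) : ℂ) := by
    have h := hroot
    rw [hz] at h
    have hek : e ^ k = Complex.exp ((((k:ℝ)-1)*θ:ℝ) * Complex.I) * e := by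
      rw [he, ← Complex.exp_nat_mul, ← Complex.exp_add]
      congr 1
      push_cast
      ring
    rw [mul_pow, hek] at h
    apply mul_right_cancel₀ he0
    push_cast at h ⊢
    linear_combination h
  have him := congrArg Complex.im heq
  simp only [Complex.mul_im, Complex.ofReal_re, Complex.ofReal_im,
    Complex.exp_ofReal_mul_I_im, Complex.exp_ofReal_mul_I_re,
    zero_mul, mul_zero, add_zero, zero_add] at him
  have hsin : Real.sin (((k:ℝ)-1)*θ) = 0 := by
    rcases mul_eq_zero.mp him with h | h
    · exact absurd h (pow_ne_zero _ hrne)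
    · exact h
  obtain ⟨n, hn⟩ := Real.sin_eq_zero_iff.mp hsin
  exact ⟨n, hn.symm⟩
end
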